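/- Let S be a semitransitive subsemigroup of the singular part I_n \ S_n (n ≥ 2). Then the union of the domains of the idempotents of S is the whole underlying set X, and S contains at least two distinct non-zero idempotents. -/
import Mathlib

/-- `ISemi n` is the symmetric inverse semigroup `I_n`, realized as the set of all
partial injective maps (partial permutations) of the `n`-element set `Fin n`,
with composition given by `PEquiv.trans` (apply the left factor first, matching
the right-action convention `x φ`). -/
abbrev ISemi (n : ℕ) := PEquiv (Fin n) (Fin n)

/-- `S` is a subsemigroup of `I_n`: a subset closed under composition. -/
def IsSubsemigroup {n : ℕ} (S : Set (ISemi n)) : Prop :=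
  ∀ a ∈ S, ∀ b ∈ S, a.trans b ∈ S

/-- `φ` belongs to the singular part `I_n \ S_n`: its domain is a proper subset
of the underlying set, i.e. it is undefined somewhere. -/
def IsSingular {n : ℕ} (φ : ISemi n) : Prop :=
  ∃ x : Fin n, φ x = none

/-- `S` is semitransitive: for all `x, y` there is `φ ∈ S` with `φ x = y` or `φ y = x`. -/
def Semitransitive {n : ℕ} (S : Set (ISemi n)) : Prop :=
  ∀ x y : Fin n, ∃ φ ∈ S, φ x = some y ∨ φ y = some x

/-- The semitransitivity preorder induced by `S`: `x ≥ y` iff some `φ ∈ S` maps `x` to `y`. -/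
def STGe {n : ℕ} (S : Set (ISemi n)) (x y : Fin n) : Prop :=
  ∃ φ ∈ S, φ x = some y

/-- The transitivity block of `x`: the equivalence class of `x` under `x ≥ y ∧ y ≥ x`. -/
def STBlock {n : ℕ} (S : Set (ISemi n)) (x : Fin n) : Set (Fin n) :=
  {y | STGe S x y ∧ STGe S y x}

/-- `k`-th power of `φ` under composition (`pePow φ 0` is the identity). -/
def pePow {n : ℕ} (φ : ISemi n) : ℕ → ISemi n
  | 0 => PEquiv.refl (Fin n)
  | k + 1 => (pePow φ k).trans φ

lemma pePow_add {n : ℕ} (f : ISemi n) (a b : ℕ) :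
    pePow f (a + b) = (pePow f a).trans (pePow f b) := by
  induction b with
  | zero => simp [pePow, PEquiv.trans_refl]
  | succ b ih =>
    show pePow f ((a + b) + 1) = _
    rw [show pePow f ((a+b)+1) = (pePow f (a+b)).trans f from rfl, ih,
      PEquiv.trans_assoc]
    rfl

lemma pePow_mem {n : ℕ} {S : Set (ISemi n)} (hsub : IsSubsemigroup S)
    {f : ISemi n} (hf : f ∈ S) : ∀ k, 1 ≤ k → pePow f k ∈ S := by
  intro k hk
  induction k with
  | zero => omega
  | succ k ih =>
    rcases Nat.eq_or_lt_of_le hk with h | h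
    · have : pePow f 1 = f := by simp [pePow, PEquiv.refl_trans]
      rw [← h, this]; exact hf
    · exact hsub _ (ih (by omega)) _ hf

lemma pePow_fix {n : ℕ} {f : ISemi n} {x : Fin n} (hx : f x = some x) :
    ∀ k, pePow f k x = some x := by
  intro k
  induction k with
  | zero => exact PEquiv.refl_apply x
  | succ k ih =>
    show (pePow f k).trans f x = some x
    rw [PEquiv.trans_eq_some]
    exact ⟨x, ih, hx⟩

lemma exists_idem_pow {n : ℕ} (f : ISemi n) :
    ∃ k, 1 ≤ k ∧ pePow f (k + k) = pePow f k := by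
  have hfin : Finite (ISemi n) :=
    Finite.of_injective (fun e => (e : Fin n → Option (Fin n))) DFunLike.coe_injective
  obtain ⟨a, b, hab, heq⟩ := Finite.exists_ne_map_eq_of_infinite (pePow f)
  -- wlog a < b
  obtain ⟨i, j, hij, hij2⟩ : ∃ i j, i < j ∧ pePow f i = pePow f j := by
    rcases lt_or_gt_of_ne hab with h | h
    · exact ⟨a, b, h, heq⟩
    · exact ⟨b, a, h, heq.symm⟩
  set p := j - i with hp
  have hp1 : 1 ≤ p := by omega
  have base : pePow f (i + p) = pePow f i := by
    rw [show i + p = j by omega]; exact hij2.symm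
  have step : ∀ m, i ≤ m → pePow f (m + p) = pePow f m := by
    intro m hm
    have h1 : m + p = (i + p) + (m - i) := by omega
    have h2 : m = i + (m - i) := by omega
    rw [h1, pePow_add, base, ← pePow_add, ← h2]
  have mult : ∀ s m, i ≤ m → pePow f (m + p * s) = pePow f m := by
    intro s
    induction s with
    | zero => intro m _; simp
    | succ s ih =>
      intro m hm
      have : m + p * (s + 1) = (m + p * s) + p := by ring
      rw [this, step _ (by omega), ih m hm]
  refine ⟨p * (i + 1), by nlinarith, ?_⟩
  have hk : i ≤ p * (i + 1) := by nlinarith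
  exact mult (i + 1) (p * (i + 1)) hk

/-- For each `x` there is an idempotent in `S` fixing `x`. -/
lemma exists_idem_fix {n : ℕ} {S : Set (ISemi n)}
    (hsub : IsSubsemigroup S) (hst : Semitransitive S) (x : Fin n) :
    ∃ e ∈ S, e.trans e = e ∧ e x = some x := by
  obtain ⟨φ, hφS, hφ⟩ := hst x x
  have hx : φ x = some x := by rcases hφ with h | h <;> exact h
  obtain ⟨k, hk1, hk⟩ := exists_idem_pow φ
  refine ⟨pePow φ k, pePow_mem hsub hφS k hk1, ?_, pePow_fix hx k⟩
  rw [← pePow_add, hk]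

/-- for a semitransitive subsemigroup `S` of the singular part
(`n ≥ 2`), the domains of the idempotents of `S` cover the underlying set and
`S` has at least two distinct non-zero idempotents. -/
theorem stmt13 (n : ℕ) (hn : 2 ≤ n) (S : Set (ISemi n))
    (hsub : IsSubsemigroup S)
    (hsing : ∀ φ ∈ S, IsSingular φ)
    (hst : Semitransitive S) :
    (∀ x : Fin n, ∃ e ∈ S, e.trans e = e ∧ (e x).isSome) ∧
    (∃ g h : ISemi n, g ∈ S ∧ h ∈ S ∧ g ≠ h ∧
      g.trans g = g ∧ h.trans h = h ∧ g ≠ ⊥ ∧ h ≠ ⊥) := by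
  constructor
  · intro x
    obtain ⟨e, heS, hee, hex⟩ := exists_idem_fix hsub hst x
    exact ⟨e, heS, hee, by rw [hex]; rfl⟩
  · obtain ⟨g, hgS, hgg, hg0⟩ := exists_idem_fix hsub hst (⟨0, by omega⟩ : Fin n)
    obtain ⟨z, hz⟩ := hsing g hgS
    obtain ⟨h, hhS, hhh, hhz⟩ := exists_idem_fix hsub hst z
    refine ⟨g, h, hgS, hhS, ?_, hgg, hhh, ?_, ?_⟩
    · intro hgh
      rw [hgh, hhz] at hz
      exact Option.some_ne_none z hz
    · intro hb
      rw [hb, PEquiv.bot_apply] at hg0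
      exact Option.some_ne_none _ hg0.symm
    · intro hb
      rw [hb, PEquiv.bot_apply] at hhz
      exact Option.some_ne_none _ hhz.symm
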